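/- (Reduced kinetic-energy metric of the rubber-rolling body.) For every s ∈ ℝ^{n−1} and all indices 1 ≤ k, l ≤ n−1, the following identity holds: (1/R²) ( I(e_k ∧ e_n), e_l ∧ e_n )_κ + m ⟨ e_k − (1/R)(e_k ∧ e_n) s̃ , e_l − (1/R)(e_l ∧ e_n) s̃ ⟩ = (1/R²) ( J_{kl} + m s_k s_l + (J_{nn} + m a²) δ_{kl} ), where ⟨·,·⟩ is the Euclidean inner product on ℝ^n and δ_{kl} the Kronecker delta. (The left-hand side is the entry K_{kl}(s) of the reduced kinetic-energy metric of the Chaplygin system.) -/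

import Mathlib

noncomputable section

/-- `u ∧ v := u vᵀ − v uᵀ`, a skew-symmetric `n × n` matrix. -/
def wedge {n : ℕ} (u v : Fin n → ℝ) : Matrix (Fin n) (Fin n) ℝ :=
  Matrix.vecMulVec u v - Matrix.vecMulVec v u

/-- Killing pairing `(ξ, η)_κ := −(1/2) tr(ξη)`. -/
def killing {n : ℕ} (ξ η : Matrix (Fin n) (Fin n) ℝ) : ℝ :=
  -(1/2) * Matrix.trace (ξ * η)

/-- Inertia operator `I(Ω) := JΩ + ΩJ` associated with the mass tensor `J`. -/
def inertia {n : ℕ} (J Ω : Matrix (Fin n) (Fin n) ℝ) : Matrix (Fin n) (Fin n) ℝ :=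
  J * Ω + Ω * J

/-- Euclidean inner product on `ℝ^n`. -/
def edot {n : ℕ} (u v : Fin n → ℝ) : ℝ := ∑ μ, u μ * v μ


lemma killing_aux (d : ℕ) (J : Matrix (Fin (d+1)) (Fin (d+1)) ℝ) (hJsym : J.IsSymm)
    (k l : Fin d) :
    killing (inertia J (wedge (Pi.single k.castSucc 1) (Pi.single (Fin.last d) 1)))
      (wedge (Pi.single l.castSucc 1) (Pi.single (Fin.last d) 1))
    = J k.castSucc l.castSucc + J (Fin.last d) (Fin.last d) * (if k = l then 1 else 0) := by
  have hk : (k.castSucc : Fin (d+1)) ≠ Fin.last d := (Fin.castSucc_lt_last k).ne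
  have hl : (l.castSucc : Fin (d+1)) ≠ Fin.last d := (Fin.castSucc_lt_last l).ne
  have hsym : ∀ i j, J i j = J j i := fun i j => hJsym.apply j i
  simp only [killing, inertia, wedge, Matrix.trace, Matrix.diag, Matrix.mul_apply,
    Matrix.add_apply, Matrix.sub_apply, Matrix.vecMulVec_apply, Pi.single_apply]
  simp [Finset.mul_sum, Finset.sum_ite_eq, Finset.sum_ite_eq', mul_ite, ite_mul,
    hk, hl, hk.symm, hl.symm, Fin.castSucc_inj, sub_mul, mul_sub, Finset.sum_sub_distrib]
  rw [hsym l.castSucc k.castSucc]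
  rcases eq_or_ne k l with h|h
  · simp [h]; ring
  · simp [h, h.symm]; ring

lemma edot_aux (d : ℕ) (R a : ℝ) (hR : R ≠ 0) (s : Fin d → ℝ) (k l : Fin d) :
    edot
      (Pi.single k.castSucc 1 -
        (1/R) • (wedge (Pi.single k.castSucc 1) (Pi.single (Fin.last d) 1)).mulVec
          (Fin.snoc s (R + a)))
      (Pi.single l.castSucc 1 -
        (1/R) • (wedge (Pi.single l.castSucc 1) (Pi.single (Fin.last d) 1)).mulVec
          (Fin.snoc s (R + a)))
    = (s k * s l + a^2 * (if k = l then 1 else 0)) / R^2 := by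
  have hk : (k.castSucc : Fin (d+1)) ≠ Fin.last d := (Fin.castSucc_lt_last k).ne
  have hl : (l.castSucc : Fin (d+1)) ≠ Fin.last d := (Fin.castSucc_lt_last l).ne
  simp only [edot, wedge, Matrix.mulVec, dotProduct, Matrix.sub_apply,
    Matrix.vecMulVec_apply, Pi.single_apply, Pi.sub_apply, Pi.smul_apply, smul_eq_mul]
  simp only [ite_mul, one_mul, zero_mul, Finset.sum_sub_distrib, Finset.sum_ite_eq,
    Finset.sum_ite_eq', Finset.mem_univ, if_true, Fin.snoc_castSucc, Fin.snoc_last]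
  simp only [mul_sub, sub_mul, mul_ite, ite_mul, mul_one, mul_zero, one_mul, zero_mul,
    Finset.sum_sub_distrib, Finset.sum_ite_eq, Finset.sum_ite_eq', Finset.mem_univ, if_true,
    hk, hl, hk.symm, hl.symm, if_false, Fin.castSucc_inj]
  rcases eq_or_ne k l with h|h
  · simp [h, hk, hl, hk.symm, hl.symm]; field_simp; ring
  · simp [h, h.symm, hk, hl, hk.symm, hl.symm]
    field_simp

/-- reduced kinetic-energy metric of the rubber-rolling body.  Here the
ambient dimension is `n = d + 1 ≥ 3` (so `d = n − 1 ≥ 2`), `e_k` for `k ≤ n − 1` is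
`Pi.single k.castSucc 1`, `e_n = Pi.single (Fin.last d) 1`, and
`s̃ = (s, R + a) = Fin.snoc s (R + a)`. -/
theorem reduced_metric_of_rubber_rolling_body
    (d : ℕ) (hd : 2 ≤ d)
    (J : Matrix (Fin (d+1)) (Fin (d+1)) ℝ) (hJsym : J.IsSymm) (hJpos : J.PosDef)
    (m R a : ℝ) (hm : 0 < m) (hR : 0 < R)
    (s : Fin d → ℝ) (k l : Fin d) :
    (1/R^2) * killing
        (inertia J (wedge (Pi.single k.castSucc 1) (Pi.single (Fin.last d) 1)))
        (wedge (Pi.single l.castSucc 1) (Pi.single (Fin.last d) 1))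
      + m * edot
          (Pi.single k.castSucc 1 -
            (1/R) • (wedge (Pi.single k.castSucc 1) (Pi.single (Fin.last d) 1)).mulVec
              (Fin.snoc s (R + a)))
          (Pi.single l.castSucc 1 -
            (1/R) • (wedge (Pi.single l.castSucc 1) (Pi.single (Fin.last d) 1)).mulVec
              (Fin.snoc s (R + a)))
    = (1/R^2) * (J k.castSucc l.castSucc + m * s k * s l
        + (J (Fin.last d) (Fin.last d) + m * a^2) * (if k = l then 1 else 0)) := by
  rw [killing_aux d J hJsym k l, edot_aux d R a hR.ne' s k l]
  rcases eq_or_ne k l with h|h <;> simp [h] <;> field_simp <;> ring
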